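/- For every pattern p ∈ S_m containing the pattern 321 and every n ≥ 2, there are infinitely many affine permutations in S̃_n that avoid p. In particular there are infinitely many 321-avoiding affine permutations in S̃_n. -/

import Mathlib

/-- `ω` contains the pattern `p`: some increasing sequence of indices has values in
the same relative order as `p`. -/
def ContainsPattern {m : ℕ} (ω : ℤ → ℤ) (p : Equiv.Perm (Fin m)) : Prop :=
  ∃ f : Fin m → ℤ, StrictMono f ∧ ∀ a b : Fin m, p a < p b ↔ ω (f a) < ω (f b)

/-- The family of affine permutations witnessing infinitude. -/
def AffF (n k : ℕ) : ℤ → ℤ :=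
  fun i => if i % (n : ℤ) = 1 then i + (k : ℤ) * ((n : ℤ) - 1) * n else i - (k : ℤ) * n

lemma affF_mono {n k : ℕ} {i j : ℤ} (hij : i < j)
    (h : (i % (n : ℤ) = 1) ↔ (j % (n : ℤ) = 1)) : AffF n k i < AffF n k j := by
  unfold AffF
  by_cases h1 : i % (n : ℤ) = 1
  · rw [if_pos h1, if_pos (h.mp h1)]; linarith
  · rw [if_neg h1, if_neg (fun hj => h1 (h.mpr hj))]; linarith

lemma affF_no321 {n k : ℕ} : ¬ ∃ i₁ i₂ i₃ : ℤ, i₁ < i₂ ∧ i₂ < i₃ ∧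
    AffF n k i₃ < AffF n k i₂ ∧ AffF n k i₂ < AffF n k i₁ := by
  rintro ⟨i₁, i₂, i₃, h12, h23, hd1, hd2⟩
  by_cases a : i₁ % (n : ℤ) = 1
  · by_cases b : i₂ % (n : ℤ) = 1
    · have := affF_mono (k := k) h12 (iff_of_true a b); linarith
    · by_cases c : i₃ % (n : ℤ) = 1
      · have := affF_mono (k := k) (h12.trans h23) (iff_of_true a c); linarith
      · have := affF_mono (k := k) h23 (iff_of_false b c); linarith
  · by_cases b : i₂ % (n : ℤ) = 1
    · by_cases c : i₃ % (n : ℤ) = 1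
      · have := affF_mono (k := k) h23 (iff_of_true b c); linarith
      · have := affF_mono (k := k) (h12.trans h23) (iff_of_false a c); linarith
    · have := affF_mono (k := k) h12 (iff_of_false a b); linarith

lemma affF_bij (n k : ℕ) : Function.Bijective (AffF n k) := by
  apply Function.bijective_iff_has_inverse.mpr
  refine ⟨fun j => if j % (n : ℤ) = 1 then j - (k : ℤ) * ((n : ℤ) - 1) * n
      else j + (k : ℤ) * n, ?_, ?_⟩
  · intro i
    unfold AffF
    by_cases h : i % (n : ℤ) = 1
    · simp only [if_pos h]
      rw [if_pos]
      · ring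
      · rw [show i + (k : ℤ) * ((n : ℤ) - 1) * n = i + ((k : ℤ) * ((n : ℤ) - 1)) * n by ring,
          Int.add_mul_emod_self_right, h]
    · simp only [if_neg h]
      rw [if_neg]
      · ring
      · rw [show i - (k : ℤ) * n = i + (-(k : ℤ)) * n by ring, Int.add_mul_emod_self_right]
        exact h
  · intro j
    by_cases h : j % (n : ℤ) = 1
    · simp only [if_pos h]
      unfold AffF
      rw [if_pos]
      · ring
      · rw [show j - (k : ℤ) * ((n : ℤ) - 1) * n = j + (-((k : ℤ) * ((n : ℤ) - 1))) * n by ring,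
          Int.add_mul_emod_self_right, h]
    · simp only [if_neg h]
      unfold AffF
      rw [if_neg]
      · ring
      · rw [show j + (k : ℤ) * n = j + ((k : ℤ)) * n by ring, Int.add_mul_emod_self_right]
        exact h

lemma affF_per (n k : ℕ) (i : ℤ) : AffF n k (i + n) = AffF n k i + n := by
  unfold AffF
  have h : (i + (n : ℤ)) % n = i % n := by
    rw [show i + (n : ℤ) = i + 1 * (n : ℤ) by ring, Int.add_mul_emod_self_right]
  rw [h]
  split <;> ring

lemma gauss (n : ℕ) : ∑ i ∈ Finset.Icc (1 : ℤ) (n : ℤ), i = ((n + 1).choose 2 : ℤ) := by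
  induction n with
  | zero => simp
  | succ n ih =>
    have h : Finset.Icc (1 : ℤ) ((n + 1 : ℕ) : ℤ) =
        insert ((n : ℤ) + 1) (Finset.Icc (1 : ℤ) (n : ℤ)) := by
      ext x
      simp only [Finset.mem_Icc, Finset.mem_insert]
      push_cast
      omega
    have hnotin : ((n : ℤ) + 1) ∉ Finset.Icc (1 : ℤ) (n : ℤ) := by
      simp [Finset.mem_Icc]
    rw [h, Finset.sum_insert hnotin, ih]
    have hc : (n + 1 + 1).choose 2 = (n + 1) + (n + 1).choose 2 := by
      rw [Nat.choose_succ_succ]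
      simp [Nat.choose_one_right]
    rw [hc]
    push_cast
    ring

lemma affF_sum (n k : ℕ) (hn : 2 ≤ n) :
    ∑ i ∈ Finset.Icc (1 : ℤ) (n : ℤ), AffF n k i = ((n + 1).choose 2 : ℤ) := by
  have hn' : (2 : ℤ) ≤ (n : ℤ) := by exact_mod_cast hn
  have hI : Finset.Icc (1 : ℤ) (n : ℤ) = insert 1 (Finset.Icc (2 : ℤ) (n : ℤ)) := by
    ext x
    simp only [Finset.mem_Icc, Finset.mem_insert]
    omega
  have h1notin : (1 : ℤ) ∉ Finset.Icc (2 : ℤ) (n : ℤ) := by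
    simp [Finset.mem_Icc]
  have hval1 : AffF n k 1 = 1 + (k : ℤ) * ((n : ℤ) - 1) * n := by
    unfold AffF
    rw [if_pos (Int.emod_eq_of_lt (by norm_num) (by omega))]
  have hrest : ∀ i ∈ Finset.Icc (2 : ℤ) (n : ℤ), AffF n k i = i - (k : ℤ) * n := by
    intro i hi
    rw [Finset.mem_Icc] at hi
    have hne : i % (n : ℤ) ≠ 1 := by
      rcases eq_or_lt_of_le hi.2 with he | hl
      · rw [he, Int.emod_self]
        norm_num
      · rw [Int.emod_eq_of_lt (by linarith) hl]
        omega
    unfold AffF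
    rw [if_neg hne]
  have hsum2 : ∑ i ∈ Finset.Icc (2 : ℤ) (n : ℤ), i = ((n + 1).choose 2 : ℤ) - 1 := by
    have hg := gauss n
    rw [hI, Finset.sum_insert h1notin] at hg
    linarith
  rw [hI, Finset.sum_insert h1notin, hval1, Finset.sum_congr rfl hrest,
    Finset.sum_sub_distrib, Finset.sum_const, hsum2, Int.card_Icc]
  rw [nsmul_eq_mul, Int.toNat_of_nonneg (by omega)]
  ring

lemma affF_inj (n : ℕ) (hn : 2 ≤ n) : Function.Injective (fun k : ℕ => AffF n k) := by
  intro k k' h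
  have h1 : AffF n k 1 = AffF n k' 1 := congrFun h 1
  have hm : (1 : ℤ) % (n : ℤ) = 1 := Int.emod_eq_of_lt (by norm_num) (by omega)
  unfold AffF at h1
  rw [if_pos hm, if_pos hm] at h1
  have hpos : (0 : ℤ) < ((n : ℤ) - 1) * n := by
    have hn' : (2 : ℤ) ≤ (n : ℤ) := by exact_mod_cast hn
    nlinarith
  have h2 : (k : ℤ) * (((n : ℤ) - 1) * n) = (k' : ℤ) * (((n : ℤ) - 1) * n) := by
    linear_combination h1
  have : (k : ℤ) = (k' : ℤ) := mul_right_cancel₀ (ne_of_gt hpos) h2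
  exact_mod_cast this

theorem contains_321_infinitely_many_avoiders (n m : ℕ) (hn : 2 ≤ n)
    (p : Equiv.Perm (Fin m))
    (h321 : ∃ i j k : Fin m, i < j ∧ j < k ∧ p k < p j ∧ p j < p i) :
    {ω : ℤ → ℤ | Function.Bijective ω ∧
      (∀ i : ℤ, ω (i + n) = ω i + n) ∧
      (∑ i ∈ Finset.Icc (1 : ℤ) (n : ℤ), ω i = ((n + 1).choose 2 : ℤ)) ∧
      ¬ ContainsPattern ω p}.Infinite ∧
    {ω : ℤ → ℤ | Function.Bijective ω ∧
      (∀ i : ℤ, ω (i + n) = ω i + n) ∧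
      (∑ i ∈ Finset.Icc (1 : ℤ) (n : ℤ), ω i = ((n + 1).choose 2 : ℤ)) ∧
      ¬ ∃ i₁ i₂ i₃ : ℤ, i₁ < i₂ ∧ i₂ < i₃ ∧ ω i₃ < ω i₂ ∧ ω i₂ < ω i₁}.Infinite := by
  have key2 : {ω : ℤ → ℤ | Function.Bijective ω ∧
      (∀ i : ℤ, ω (i + n) = ω i + n) ∧
      (∑ i ∈ Finset.Icc (1 : ℤ) (n : ℤ), ω i = ((n + 1).choose 2 : ℤ)) ∧
      ¬ ∃ i₁ i₂ i₃ : ℤ, i₁ < i₂ ∧ i₂ < i₃ ∧ ω i₃ < ω i₂ ∧ ω i₂ < ω i₁}.Infinite := by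
    apply Set.infinite_of_injective_forall_mem (f := fun k : ℕ => AffF n k) (affF_inj n hn)
    intro k
    exact ⟨affF_bij n k, affF_per n k, affF_sum n k hn, affF_no321⟩
  refine ⟨key2.mono ?_, key2⟩
  rintro ω ⟨hb, hp, hs, hno⟩
  refine ⟨hb, hp, hs, ?_⟩
  rintro ⟨f, hf, hiff⟩
  obtain ⟨i, j, k, hij, hjk, hkj, hji⟩ := h321
  exact hno ⟨f i, f j, f k, hf hij, hf hjk, (hiff k j).mp hkj, (hiff j i).mp hji⟩
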